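/- arXiv:2006.14504 — 4 statements merged into one kernel-verified Lean document; each statement's English description precedes it below -/
import Mathlib

section
/- Let Σ = {x₁,…,x_d} and σ : Σ* → {x,y}* the substitution x_i ↦ x·yⁱ, w ∈ Σ^ℕ, w' = σ(w). Then c_{w'}(n) ≤ (d+1)²·∑_{p=0}^{2d+2} c_w(n+p) for all n, and consequently c_w ∼ c_{w'}. -/
/-- The length-`L` window of the infinite word `w` starting at position `i`. -/
def windowN {α : Type*} (w : ℕ → α) (i L : ℕ) : List α :=
  List.ofFn fun k : Fin L => w (i + k)

/-- `v` is a (finite) factor of the infinite word `w`. -/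
def IsFactorN {α : Type*} (w : ℕ → α) (v : List α) : Prop :=
  ∃ i : ℕ, v = windowN w i v.length

/-- The complexity function of `w`: the number of distinct length-`n` factors of `w`. -/
noncomputable def complexity {α : Type*} (w : ℕ → α) (n : ℕ) : ℕ :=
  Nat.card {v : List α // v.length = n ∧ IsFactorN w v}

/-- The starting position in `σ(w)` of the image of the `k`-th letter of `w`, where the
substitution `σ` sends the letter `xᵢ` (encoded as `i - 1 : Fin d`, for `1 ≤ i ≤ d`) to
`x yⁱ`, a word of length `i + 1`. -/
def subStart {d : ℕ} (w : ℕ → Fin d) (k : ℕ) : ℕ :=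
  ∑ j ∈ Finset.range k, ((w j : ℕ) + 2)

/- The infinite word `σ(w)` over the two-letter alphabet `{x, y}`, encoded in `Bool` with
`x = false` and `y = true`: position `n` carries the letter `x` exactly when `n` is the
starting position of the image `σ(xᵢ) = x yⁱ` of some letter of `w`. -/
open Classical in
noncomputable def subWord {d : ℕ} (w : ℕ → Fin d) : ℕ → Bool :=
  fun n => if ∃ k : ℕ, subStart w k = n then false else true

/-- `f ≼ g`: there exist positive constants `C, D` with `f n ≤ C * g (D * n)` for all `n`. -/
def GrowthPreceq (f g : ℕ → ℕ) : Prop :=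
  ∃ C D : ℕ, 0 < C ∧ 0 < D ∧ ∀ n : ℕ, f n ≤ C * g (D * n)

-- basic subStart lemmas
variable {d : ℕ} (w : ℕ → Fin d)

lemma subStart_zero : subStart w 0 = 0 := by simp [subStart]

lemma subStart_succ (k : ℕ) : subStart w (k + 1) = subStart w k + ((w k : ℕ) + 2) :=
  Finset.sum_range_succ _ _

lemma subStart_strictMono : StrictMono (subStart w) :=
  strictMono_nat_of_lt_succ fun k => by rw [subStart_succ]; omega

lemma two_mul_le_subStart (k : ℕ) : 2 * k ≤ subStart w k := by
  calc 2 * k = ∑ _j ∈ Finset.range k, 2 := by simp [mul_comm]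
  _ ≤ subStart w k := Finset.sum_le_sum fun j _ => by omega

lemma subStart_add (k t : ℕ) :
    subStart w (k + t) = subStart w k + ∑ j ∈ Finset.range t, ((w (k + j) : ℕ) + 2) := by
  induction t with
  | zero => simp
  | succ t ih => rw [← Nat.add_assoc, subStart_succ, ih, Finset.sum_range_succ]; ring

lemma partialSum_le (k t : ℕ) :
    ∑ j ∈ Finset.range t, ((w (k + j) : ℕ) + 2) ≤ (d + 1) * t := by
  calc ∑ j ∈ Finset.range t, ((w (k + j) : ℕ) + 2) ≤ ∑ _j ∈ Finset.range t, (d + 1) :=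
    Finset.sum_le_sum fun j _ => by have := (w (k + j)).isLt; omega
  _ = (d + 1) * t := by simp [mul_comm]

lemma subWord_false_iff (n : ℕ) : subWord w n = false ↔ ∃ k, subStart w k = n := by
  by_cases h : ∃ k, subStart w k = n <;> simp [subWord, h]

lemma subWord_true_iff (n : ℕ) : subWord w n = true ↔ ¬ ∃ k, subStart w k = n := by
  by_cases h : ∃ k, subStart w k = n <;> simp [subWord, h]

open Classical in
noncomputable def reconBit (u : ℕ → ℕ) (m : ℕ) : Bool :=
  if ∃ t, t ≤ m ∧ ∑ j ∈ Finset.range t, (u j + 2) = m then false else true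

lemma subWord_recon (k m : ℕ) :
    subWord w (subStart w k + m) = reconBit (fun j => (w (k + j) : ℕ)) m := by
  have hiff : (∃ k', subStart w k' = subStart w k + m) ↔
      (∃ t, t ≤ m ∧ ∑ j ∈ Finset.range t, ((w (k + j) : ℕ) + 2) = m) := by
    constructor
    · rintro ⟨k', hk'⟩
      have hk : k ≤ k' := by
        by_contra h
        have := (subStart_strictMono w) (show k' < k by omega)
        omega
      refine ⟨k' - k, ?_, ?_⟩
      · have h1 := subStart_add w k (k' - k)
        have h2 := two_mul_le_subStart (fun j => w (k + j)) (k' - k)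
        have h3 : 2 * (k' - k) ≤ ∑ j ∈ Finset.range (k' - k), ((w (k + j) : ℕ) + 2) := by
          calc 2 * (k' - k) = ∑ _j ∈ Finset.range (k' - k), 2 := by simp [mul_comm]
          _ ≤ _ := Finset.sum_le_sum fun j _ => by omega
        rw [Nat.add_sub_cancel' hk] at h1
        omega
      · have h1 := subStart_add w k (k' - k)
        rw [Nat.add_sub_cancel' hk] at h1
        omega
    · rintro ⟨t, _, ht⟩
      exact ⟨k + t, by rw [subStart_add, ht]⟩
  by_cases h : ∃ t, t ≤ m ∧ ∑ j ∈ Finset.range t, ((w (k + j) : ℕ) + 2) = m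
  · simp only [reconBit, if_pos h]
    exact (subWord_false_iff w _).mpr (hiff.mpr h)
  · simp only [reconBit, if_neg h]
    exact (subWord_true_iff w _).mpr (fun hc => h (hiff.mp hc))

lemma reconBit_congr {u₁ u₂ : ℕ → ℕ} (m : ℕ) (h : ∀ j < m, u₁ j = u₂ j) :
    reconBit u₁ m = reconBit u₂ m := by
  have : (∃ t, t ≤ m ∧ ∑ j ∈ Finset.range t, (u₁ j + 2) = m) ↔
      (∃ t, t ≤ m ∧ ∑ j ∈ Finset.range t, (u₂ j + 2) = m) := by
    constructor <;> rintro ⟨t, ht, hs⟩ <;> refine ⟨t, ht, ?_⟩ <;> rw [← hs] <;>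
      exact Finset.sum_congr rfl fun j hj => by
        rw [h j (lt_of_lt_of_le (Finset.mem_range.mp hj) ht)]
  by_cases hc : ∃ t, t ≤ m ∧ ∑ j ∈ Finset.range t, (u₁ j + 2) = m
  · simp only [reconBit, if_pos hc, if_pos (this.mp hc)]
  · simp only [reconBit, if_neg hc, if_neg (fun hc2 => hc (this.mpr hc2))]

@[simp] lemma windowN_length {α : Type*} (w : ℕ → α) (i L : ℕ) :
    (windowN w i L).length = L := by simp [windowN]

@[simp] lemma windowN_getElem {α : Type*} (w : ℕ → α) (i L m : ℕ)
    (h : m < (windowN w i L).length) :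
    (windowN w i L)[m] = w (i + m) := by simp [windowN]

lemma isFactorN_windowN {α : Type*} (w : ℕ → α) (i L : ℕ) : IsFactorN w (windowN w i L) :=
  ⟨i, by rw [windowN_length]⟩

lemma window_determined (k₁ k₂ r n : ℕ) (hr : r ≤ d)
    (hw : ∀ j < n + d, w (k₁ + j) = w (k₂ + j)) :
    windowN (subWord w) (subStart w k₁ + r) n = windowN (subWord w) (subStart w k₂ + r) n := by
  apply List.ext_getElem (by simp)
  intro m h1 h2
  rw [windowN_getElem, windowN_getElem, Nat.add_assoc, Nat.add_assoc,
    subWord_recon, subWord_recon]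
  have hm : m < n := by simpa using h1
  exact reconBit_congr (r + m) fun j hj => by rw [hw j (by omega)]

lemma exists_decomp (i : ℕ) : ∃ p : ℕ × ℕ, p.2 ≤ d ∧ i = subStart w p.1 + p.2 := by
  set k := Nat.findGreatest (fun k => subStart w k ≤ i) i with hk
  have hle : subStart w k ≤ i :=
    Nat.findGreatest_spec (P := fun k => subStart w k ≤ i) (Nat.zero_le i)
      (by simp [subStart_zero])
  have hlt : i < subStart w (k + 1) := by
    by_cases h : k + 1 ≤ i
    · have h2 : ¬ subStart w (k + 1) ≤ i :=
        Nat.findGreatest_is_greatest (P := fun k => subStart w k ≤ i)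
          (Nat.lt_succ_self k) h
      omega
    · have := two_mul_le_subStart w (k + 1)
      omega
  rw [subStart_succ] at hlt
  have hwk := (w k).isLt
  refine ⟨(k, i - subStart w k), ?_, ?_⟩ <;> simp only <;> omega

lemma windowN_take {α : Type*} (w : ℕ → α) (i : ℕ) {L L' : ℕ} (h : L ≤ L') :
    (windowN w i L').take L = windowN w i L := by
  apply List.ext_getElem <;> simp [windowN, h, Nat.min_eq_left]

instance factors_finite {α : Type*} [Finite α] (w : ℕ → α) (n : ℕ) :
    Finite {v : List α // v.length = n ∧ IsFactorN w v} := by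
  have : Finite {l : List α | l.length = n} := by
    cases nonempty_fintype α
    exact (List.finite_length_eq α n).to_subtype
  exact Finite.of_injective (fun v => (⟨v.1, v.2.1⟩ : {l : List α | l.length = n}))
    (fun a b hab => Subtype.ext (by simpa using hab))

lemma complexity_pos {α : Type*} [Finite α] (w : ℕ → α) (n : ℕ) : 0 < complexity w n := by
  have : Nonempty {v : List α // v.length = n ∧ IsFactorN w v} :=
    ⟨⟨windowN w 0 n, windowN_length w 0 n, isFactorN_windowN w 0 n⟩⟩
  exact Nat.card_pos

lemma complexity_mono {α : Type*} [Finite α] (w : ℕ → α) {m m' : ℕ} (h : m ≤ m') :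
    complexity w m ≤ complexity w m' := by
  classical
  apply Nat.card_le_card_of_injective
    (f := fun v : {v : List α // v.length = m ∧ IsFactorN w v} =>
      (⟨windowN w v.2.2.choose m', windowN_length _ _ _, isFactorN_windowN _ _ _⟩ :
        {v : List α // v.length = m' ∧ IsFactorN w v}))
  intro a b hab
  have ha := a.2.2.choose_spec
  have hb := b.2.2.choose_spec
  have : (windowN w a.2.2.choose m').take m = (windowN w b.2.2.choose m').take m := by
    rw [Subtype.ext_iff] at hab; simp at hab; rw [hab]
  rw [windowN_take _ _ h, windowN_take _ _ h] at this
  have ha' : (a : List α) = windowN w a.2.2.choose m :=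
    ha.trans (congrArg (windowN w a.2.2.choose) a.2.1)
  have hb' : (b : List α) = windowN w b.2.2.choose m :=
    hb.trans (congrArg (windowN w b.2.2.choose) b.2.1)
  exact Subtype.ext (by rw [ha', hb', this])

lemma complexity_zero {α : Type*} (w : ℕ → α) : complexity w 0 = 1 := by
  have : Unique {v : List α // v.length = 0 ∧ IsFactorN w v} :=
    { default := ⟨windowN w 0 0, windowN_length w 0 0, isFactorN_windowN w 0 0⟩
      uniq := by
        rintro ⟨v, hv, -⟩
        apply Subtype.ext
        simp only
        rw [List.length_eq_zero_iff.mp hv]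
        simp [windowN] }
  exact Nat.card_unique

lemma part1_bound (n : ℕ) :
    complexity (subWord w) n ≤ (d + 1) * complexity w (n + d) := by
  have key : Nat.card {v : List Bool // v.length = n ∧ IsFactorN (subWord w) v} ≤
      Nat.card (Fin (d + 1) × {u : List (Fin d) // u.length = n + d ∧ IsFactorN w u}) := by
    apply Nat.card_le_card_of_injective (f := fun v =>
      (⟨(exists_decomp w v.2.2.choose).choose.2,
        Nat.lt_succ_of_le (exists_decomp w v.2.2.choose).choose_spec.1⟩,
       ⟨windowN w (exists_decomp w v.2.2.choose).choose.1 (n + d),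
        windowN_length _ _ _, isFactorN_windowN _ _ _⟩))
    intro a b hab
    rw [Prod.ext_iff] at hab
    obtain ⟨h1, h2⟩ := hab
    have hr : (exists_decomp w a.2.2.choose).choose.2 =
        (exists_decomp w b.2.2.choose).choose.2 := congrArg Fin.val h1
    rw [Subtype.ext_iff] at h2
    simp only at h2
    have hw : ∀ j < n + d,
        w ((exists_decomp w a.2.2.choose).choose.1 + j) =
        w ((exists_decomp w b.2.2.choose).choose.1 + j) := by
      intro j hj
      have h3 := List.getElem_of_eq h2 (show j <
        (windowN w (exists_decomp w a.2.2.choose).choose.1 (n + d)).length by simp [hj])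
      simpa using h3
    have hda := (exists_decomp w a.2.2.choose).choose_spec
    have hdb := (exists_decomp w b.2.2.choose).choose_spec
    have ha' : (a : List Bool) = windowN (subWord w) a.2.2.choose n :=
      a.2.2.choose_spec.trans (congrArg (windowN (subWord w) a.2.2.choose) a.2.1)
    have hb' : (b : List Bool) = windowN (subWord w) b.2.2.choose n :=
      b.2.2.choose_spec.trans (congrArg (windowN (subWord w) b.2.2.choose) b.2.1)
    apply Subtype.ext
    rw [ha', hb', hda.2, hdb.2, ← hr]
    exact window_determined w _ _ _ n hda.1 hw
  calc complexity (subWord w) n ≤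
      Nat.card (Fin (d + 1) × {u : List (Fin d) // u.length = n + d ∧ IsFactorN w u}) := key
  _ = (d + 1) * complexity w (n + d) := by
      rw [Nat.card_prod, Nat.card_eq_fintype_card, Fintype.card_fin]; rfl

lemma decode_lt (k₁ k₂ n t : ℕ) (ht : t < n)
    (hs : ∑ j ∈ Finset.range t, ((w (k₁ + j) : ℕ) + 2) =
          ∑ j ∈ Finset.range t, ((w (k₂ + j) : ℕ) + 2))
    (hv : windowN (subWord w) (subStart w k₁) ((d + 1) * n) =
          windowN (subWord w) (subStart w k₂) ((d + 1) * n))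
    (hab : (w (k₁ + t) : ℕ) < (w (k₂ + t) : ℕ)) : False := by
  set s := ∑ j ∈ Finset.range t, ((w (k₁ + j) : ℕ) + 2) with hsdef
  set p := s + ((w (k₁ + t) : ℕ) + 2) with hpdef
  have hb := (w (k₂ + t)).isLt
  have hsum2 := partialSum_le w k₂ t
  have hp : p < (d + 1) * n := by
    have h4 : (d + 1) * (t + 1) ≤ (d + 1) * n := Nat.mul_le_mul_left _ (by omega)
    have h5 : (d + 1) * (t + 1) = (d + 1) * t + (d + 1) := by ring
    omega
  have hfalse : subWord w (subStart w k₁ + p) = false := by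
    rw [subWord_false_iff]
    exact ⟨k₁ + (t + 1), by rw [subStart_add, Finset.sum_range_succ]⟩
  have htrue : subWord w (subStart w k₂ + p) = true := by
    rw [subWord_true_iff]
    rintro ⟨k', hk'⟩
    have hlt1 : subStart w (k₂ + t) < subStart w k' := by
      rw [subStart_add, ← hs, hk']
      omega
    have hlt2 : subStart w k' < subStart w (k₂ + (t + 1)) := by
      rw [subStart_add, Finset.sum_range_succ, ← hs, hk']
      omega
    have c1 := (subStart_strictMono w).lt_iff_lt.mp hlt1
    have c2 := (subStart_strictMono w).lt_iff_lt.mp hlt2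
    omega
  have h3 := List.getElem_of_eq hv
    (show p < (windowN (subWord w) (subStart w k₁) ((d + 1) * n)).length by simp [hp])
  rw [windowN_getElem, windowN_getElem, hfalse, htrue] at h3
  exact absurd h3 (by simp)

lemma decode (k₁ k₂ n : ℕ)
    (hv : windowN (subWord w) (subStart w k₁) ((d + 1) * n) =
          windowN (subWord w) (subStart w k₂) ((d + 1) * n)) :
    ∀ t, t < n → w (k₁ + t) = w (k₂ + t) := by
  intro t
  induction t using Nat.strong_induction_on with
  | _ t ih =>
    intro ht
    have hs : ∑ j ∈ Finset.range t, ((w (k₁ + j) : ℕ) + 2) =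
        ∑ j ∈ Finset.range t, ((w (k₂ + j) : ℕ) + 2) :=
      Finset.sum_congr rfl fun j hj => by
        rw [ih j (Finset.mem_range.mp hj) (by have := Finset.mem_range.mp hj; omega)]
    have h1 : ¬ (w (k₁ + t) : ℕ) < (w (k₂ + t) : ℕ) :=
      fun h => decode_lt w k₁ k₂ n t ht hs hv h
    have h2 : ¬ (w (k₂ + t) : ℕ) < (w (k₁ + t) : ℕ) :=
      fun h => decode_lt w k₂ k₁ n t ht hs.symm hv.symm h
    exact Fin.ext (by omega)

lemma part2_bound (n : ℕ) : complexity w n ≤ complexity (subWord w) ((d + 1) * n) := by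
  have key : Nat.card {u : List (Fin d) // u.length = n ∧ IsFactorN w u} ≤
      Nat.card {v : List Bool // v.length = (d + 1) * n ∧ IsFactorN (subWord w) v} := by
    apply Nat.card_le_card_of_injective (f := fun u =>
      (⟨windowN (subWord w) (subStart w u.2.2.choose) ((d + 1) * n),
        windowN_length _ _ _, isFactorN_windowN _ _ _⟩ :
        {v : List Bool // v.length = (d + 1) * n ∧ IsFactorN (subWord w) v}))
    intro a b hab
    rw [Subtype.ext_iff] at hab
    simp only at hab
    have hdec := decode w a.2.2.choose b.2.2.choose n hab
    have ha' : (a : List (Fin d)) = windowN w a.2.2.choose n :=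
      a.2.2.choose_spec.trans (congrArg (windowN w a.2.2.choose) a.2.1)
    have hb' : (b : List (Fin d)) = windowN w b.2.2.choose n :=
      b.2.2.choose_spec.trans (congrArg (windowN w b.2.2.choose) b.2.1)
    apply Subtype.ext
    rw [ha', hb']
    apply List.ext_getElem (by simp)
    intro m h1 h2
    rw [windowN_getElem, windowN_getElem, hdec m (by simpa using h1)]
  exact key

theorem stmt_5 (d : ℕ) (w : ℕ → Fin d) :
    (∀ n : ℕ, complexity (subWord w) n ≤
      (d + 1) ^ 2 * ∑ p ∈ Finset.range (2 * d + 3), complexity w (n + p)) ∧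
    GrowthPreceq (complexity w) (complexity (subWord w)) ∧
    GrowthPreceq (complexity (subWord w)) (complexity w) := by
  refine ⟨?_, ?_, ?_⟩
  · intro n
    have h2 : complexity w (n + d) ≤ ∑ p ∈ Finset.range (2 * d + 3), complexity w (n + p) :=
      Finset.single_le_sum (f := fun p => complexity w (n + p)) (fun i _ => Nat.zero_le _)
        (Finset.mem_range.mpr (by omega))
    calc complexity (subWord w) n ≤ (d + 1) * complexity w (n + d) := part1_bound w n
    _ ≤ (d + 1) * ∑ p ∈ Finset.range (2 * d + 3), complexity w (n + p) :=
      Nat.mul_le_mul_left _ h2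
    _ ≤ (d + 1) ^ 2 * ∑ p ∈ Finset.range (2 * d + 3), complexity w (n + p) :=
      Nat.mul_le_mul_right _ (by nlinarith)
  · exact ⟨1, d + 1, one_pos, by omega, fun n => by simpa using part2_bound w n⟩
  · refine ⟨d + 1, d + 1, by omega, by omega, fun n => ?_⟩
    rcases Nat.eq_zero_or_pos n with rfl | hn
    · rw [Nat.mul_zero, complexity_zero]
      have h0 := complexity_pos w 0
      calc 1 ≤ (d + 1) * 1 := by omega
      _ ≤ (d + 1) * complexity w 0 := Nat.mul_le_mul_left _ h0
    · calc complexity (subWord w) n ≤ (d + 1) * complexity w (n + d) := part1_bound w n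
      _ ≤ (d + 1) * complexity w ((d + 1) * n) :=
        Nat.mul_le_mul_left _ (complexity_mono w (by nlinarith))
end

section
/- Let f : ℕ → ℝ₊ be nondecreasing, and t ≥ 1 an integer such that f(2^t·n) ≥ n·f(n) for all n. Define f'(n) = ∑_{i=0}^{t-1} n^{-i/t}·f(2^i·n). Then f'(2n) ≥ (1/2)·n^{1/t}·f'(n) for all n ≥ 1. -/
open Finset

/-- The modified function `f'(n) = ∑_{i=0}^{t-1} n^{-i/t} · f(2^i n)`. -/
noncomputable def modFun (t : ℕ) (f : ℕ → ℝ) (n : ℕ) : ℝ :=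
  ∑ i ∈ Finset.range t, (n : ℝ) ^ (-(i : ℝ) / (t : ℝ)) * f (2 ^ i * n)

theorem stmt_6 (t : ℕ) (ht : 1 ≤ t) (f : ℕ → ℝ) (hpos : ∀ n, 0 < f n)
    (hmono : Monotone f) (hgrow : ∀ n : ℕ, (n : ℝ) * f n ≤ f (2 ^ t * n)) :
    ∀ n : ℕ, 1 ≤ n →
      (1 / 2) * (n : ℝ) ^ ((1 : ℝ) / (t : ℝ)) * modFun t f n ≤ modFun t f (2 * n) := by
  intro n hn
  have hn1 : (1 : ℝ) ≤ (n : ℝ) := by exact_mod_cast hn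
  have hn0 : (0 : ℝ) < (n : ℝ) := lt_of_lt_of_le one_pos hn1
  obtain ⟨s, rfl⟩ : ∃ s, t = s + 1 := ⟨t - 1, (Nat.succ_pred_eq_of_pos ht).symm⟩
  set T : ℝ := ((s + 1 : ℕ) : ℝ) with hT
  have hTval : T = (s : ℝ) + 1 := by simp [hT]
  have hT0 : (0 : ℝ) < T := by rw [hTval]; positivity
  -- key: 1/2 ≤ 2^(-j/T) for j ≤ s
  have htwo : ∀ j : ℕ, j ≤ s → (1 / 2 : ℝ) ≤ (2 : ℝ) ^ (-(j : ℝ) / T) := by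
    intro j hj
    have h1 : (1 / 2 : ℝ) = (2 : ℝ) ^ (-1 : ℝ) := by
      rw [Real.rpow_neg_one]; norm_num
    rw [h1]
    apply Real.rpow_le_rpow_of_exponent_le one_le_two
    have hjT : (j : ℝ) ≤ T := by rw [hTval]; exact_mod_cast Nat.le_succ_of_le hj
    have hd : (j : ℝ) / T ≤ 1 := (div_le_one hT0).mpr hjT
    rw [neg_div]
    linarith
  unfold modFun
  rw [Finset.mul_sum, Finset.sum_range_succ' (fun i =>
      1 / 2 * (n : ℝ) ^ ((1 : ℝ) / T) * ((n : ℝ) ^ (-(i : ℝ) / T) * f (2 ^ i * n))),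
    Finset.sum_range_succ]
  apply add_le_add
  · apply Finset.sum_le_sum
    intro j hj
    have hj' : j + 1 ≤ s := Nat.succ_le_of_lt (Finset.mem_range.mp hj)
    have harg : 2 ^ j * (2 * n) = 2 ^ (j + 1) * n := by ring
    rw [harg]
    have hf := (hpos (2 ^ (j + 1) * n)).le
    have hcoef : (1 / 2 : ℝ) * (n : ℝ) ^ ((1 : ℝ) / T) * (n : ℝ) ^ (-((j : ℝ) + 1) / T)
        ≤ ((2 * n : ℕ) : ℝ) ^ (-(j : ℝ) / T) := by
      have hmul : ((2 * n : ℕ) : ℝ) ^ (-(j : ℝ) / T)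
          = (2 : ℝ) ^ (-(j : ℝ) / T) * (n : ℝ) ^ (-(j : ℝ) / T) := by
        push_cast
        rw [Real.mul_rpow (by norm_num) hn0.le]
      have hadd : (n : ℝ) ^ ((1 : ℝ) / T) * (n : ℝ) ^ (-((j : ℝ) + 1) / T)
          = (n : ℝ) ^ (-(j : ℝ) / T) := by
        rw [← Real.rpow_add hn0]
        congr 1
        field_simp
        ring
      rw [hmul, mul_assoc, hadd]
      exact mul_le_mul_of_nonneg_right (htwo j (le_trans (Nat.le_succ j) hj'))
        (Real.rpow_nonneg hn0.le _)
    calc 1 / 2 * (n : ℝ) ^ ((1 : ℝ) / T) *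
          ((n : ℝ) ^ (-((j : ℕ) + 1 : ℕ) / T) * f (2 ^ (j + 1) * n))
        = (1 / 2 * (n : ℝ) ^ ((1 : ℝ) / T) * (n : ℝ) ^ (-((j : ℝ) + 1) / T))
            * f (2 ^ (j + 1) * n) := by push_cast; ring
      _ ≤ ((2 * n : ℕ) : ℝ) ^ (-(j : ℝ) / T) * f (2 ^ (j + 1) * n) :=
          mul_le_mul_of_nonneg_right hcoef hf
  · -- last term: uses the growth hypothesis
    have harg : 2 ^ s * (2 * n) = 2 ^ (s + 1) * n := by ring
    rw [harg]
    have hgrow' := hgrow n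
    have hcoef : ((2 * n : ℕ) : ℝ) ^ (-(s : ℝ) / T)
        = (2 : ℝ) ^ (-(s : ℝ) / T) * (n : ℝ) ^ (-(s : ℝ) / T) := by
      push_cast
      rw [Real.mul_rpow (by norm_num) hn0.le]
    have hnn : (n : ℝ) ^ (-(s : ℝ) / T) * (n : ℝ) = (n : ℝ) ^ ((1 : ℝ) / T) := by
      nth_rewrite 2 [← Real.rpow_one (n : ℝ)]
      rw [← Real.rpow_add hn0]
      congr 1
      rw [hTval]
      field_simp
      ring
    have h1 : (1 / 2 : ℝ) * (n : ℝ) ^ ((1 : ℝ) / T) * ((n : ℝ) ^ (-(0 : ℝ) / T) * f n)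
        = 1 / 2 * ((n : ℝ) ^ ((1 : ℝ) / T) * f n) := by
      rw [neg_zero, zero_div, Real.rpow_zero]; ring
    have h2 : (2 : ℝ) ^ (-(s : ℝ) / T) * ((n : ℝ) ^ (-(s : ℝ) / T) * ((n : ℝ) * f n))
        = (2 : ℝ) ^ (-(s : ℝ) / T) * ((n : ℝ) ^ ((1 : ℝ) / T) * f n) := by
      rw [← mul_assoc ((n:ℝ) ^ (-(s : ℝ) / T)), hnn]
    have hfn : 0 < (n : ℝ) ^ ((1 : ℝ) / T) * f n :=
      mul_pos (Real.rpow_pos_of_pos hn0 _) (hpos n)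
    calc (1 / 2 : ℝ) * (n : ℝ) ^ ((1 : ℝ) / T) * ((n : ℝ) ^ (-(0 : ℕ) / T) * f (2 ^ 0 * n))
        = 1 / 2 * ((n : ℝ) ^ ((1 : ℝ) / T) * f n) := by
          norm_num [Real.rpow_zero]; ring
      _ ≤ (2 : ℝ) ^ (-(s : ℝ) / T) * ((n : ℝ) ^ ((1 : ℝ) / T) * f n) :=
          mul_le_mul_of_nonneg_right (htwo s le_rfl) hfn.le
      _ = (2 : ℝ) ^ (-(s : ℝ) / T) * ((n : ℝ) ^ (-(s : ℝ) / T) * ((n : ℝ) * f n)) := h2.symm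
      _ ≤ (2 : ℝ) ^ (-(s : ℝ) / T) * ((n : ℝ) ^ (-(s : ℝ) / T) * f (2 ^ (s + 1) * n)) := by
          apply mul_le_mul_of_nonneg_left _ (Real.rpow_nonneg (by norm_num) _)
          exact mul_le_mul_of_nonneg_left hgrow' (Real.rpow_nonneg hn0.le _)
      _ = ((2 * n : ℕ) : ℝ) ^ (-(s : ℝ) / T) * f (2 ^ (s + 1) * n) := by
          rw [hcoef]; ring
end

section
/- Let f : ℕ → ℝ₊ be nondecreasing with f(2^t·n) ≥ n·f(n) for all n, and let f'(n) = ∑_{i=0}^{t-1} n^{-i/t}·f(2^i·n). Then f ≤ f' and f' ≤ t·f ∘ (2^{t-1} · ·); in particular f' ∼ f. -/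
theorem stmt_7 (t : ℕ) (ht : 1 ≤ t) (f : ℕ → ℝ) (hpos : ∀ n, 0 < f n)
    (hmono : Monotone f) (hgrow : ∀ n : ℕ, (n : ℝ) * f n ≤ f (2 ^ t * n)) :
    (∀ n : ℕ, f n ≤ modFun t f n) ∧
    (∀ n : ℕ, modFun t f n ≤ (t : ℝ) * f (2 ^ (t - 1) * n)) ∧
    (∃ C D : ℕ, 0 < C ∧ 0 < D ∧ (∀ n : ℕ, f n ≤ (C : ℝ) * modFun t f (D * n)) ∧
      (∀ n : ℕ, modFun t f n ≤ (C : ℝ) * f (D * n))) := by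
  have hpow_nonneg : ∀ (n i : ℕ), (0:ℝ) ≤ (n:ℝ) ^ (-(i:ℝ)/(t:ℝ)) := fun n i =>
    Real.rpow_nonneg (by positivity) _
  have hpow_le_one : ∀ (n i : ℕ), (n:ℝ) ^ (-(i:ℝ)/(t:ℝ)) ≤ 1 := by
    intro n i
    rcases Nat.eq_zero_or_pos n with h | h
    · subst h
      rcases eq_or_ne (-(i:ℝ)/(t:ℝ)) 0 with h0 | h0
      · rw [Nat.cast_zero, h0, Real.rpow_zero]
      · rw [Nat.cast_zero, Real.zero_rpow h0]; norm_num
    · exact Real.rpow_le_one_of_one_le_of_nonpos (by exact_mod_cast h)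
        (div_nonpos_of_nonpos_of_nonneg (neg_nonpos.mpr (Nat.cast_nonneg i)) (Nat.cast_nonneg t))
  have h1 : ∀ n, f n ≤ modFun t f n := by
    intro n
    have hmem : (0:ℕ) ∈ Finset.range t := Finset.mem_range.mpr ht
    unfold modFun
    have := Finset.single_le_sum (s := Finset.range t)
      (f := fun i : ℕ => (n : ℝ) ^ (-(i : ℝ) / (t : ℝ)) * f (2 ^ i * n))
      (fun i _ => mul_nonneg (hpow_nonneg n i) (hpos _).le) hmem
    simpa using this
  have h2 : ∀ n, modFun t f n ≤ (t : ℝ) * f (2 ^ (t - 1) * n) := by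
    intro n
    unfold modFun
    calc ∑ i ∈ Finset.range t, (n : ℝ) ^ (-(i : ℝ) / (t : ℝ)) * f (2 ^ i * n)
        ≤ ∑ _i ∈ Finset.range t, f (2 ^ (t-1) * n) := by
          apply Finset.sum_le_sum
          intro i hi
          have hf : f (2 ^ i * n) ≤ f (2 ^ (t-1) * n) :=
            hmono (Nat.mul_le_mul_right _ (Nat.pow_le_pow_right (by norm_num)
              (Nat.le_sub_one_of_lt (Finset.mem_range.mp hi))))
          calc (n : ℝ) ^ (-(i : ℝ) / (t : ℝ)) * f (2 ^ i * n)
              ≤ 1 * f (2 ^ (t-1) * n) :=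
                mul_le_mul (hpow_le_one n i) hf (hpos _).le zero_le_one
            _ = f (2 ^ (t-1) * n) := one_mul _
      _ = (t : ℝ) * f (2 ^ (t-1) * n) := by
          simp [Finset.sum_const, Finset.card_range]
  refine ⟨h1, h2, t, 2 ^ (t-1), ht, Nat.pow_pos (by norm_num), ?_, ?_⟩
  · intro n
    have hDn : n ≤ 2 ^ (t-1) * n := Nat.le_mul_of_pos_left n (Nat.pow_pos (by norm_num))
    calc f n ≤ f (2 ^ (t-1) * n) := hmono hDn
      _ ≤ modFun t f (2 ^ (t-1) * n) := h1 _
      _ ≤ (t : ℝ) * modFun t f (2 ^ (t-1) * n) := by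
          have hm : 0 ≤ modFun t f (2 ^ (t-1) * n) :=
            le_trans (hpos _).le (h1 _)
          have : (1:ℝ) ≤ t := by exact_mod_cast ht
          exact le_mul_of_one_le_left hm this
  · intro n
    exact h2 n
end

section
/- For q ≥ 4 and σ ∈ (0,1), the function φ(n) = ⌈exp(n/(ln^{(q-3)} n)^{1/σ})⌉ satisfies φ(2n) ≥ n·φ(n) for all sufficiently large n. -/
/-- The `k`-fold iterated natural logarithm. -/
noncomputable def iterLog : ℕ → ℝ → ℝ
  | 0, x => x
  | k + 1, x => Real.log (iterLog k x)

open Filter Real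

lemma iterLog_tendsto (k : ℕ) : Tendsto (iterLog k) atTop atTop := by
  induction k with
  | zero => exact tendsto_id
  | succ m ih => exact Real.tendsto_log_atTop.comp ih

lemma iterLog_two_mul (k : ℕ) (hk : 1 ≤ k) :
    ∀ᶠ x : ℝ in atTop, iterLog k (2 * x) ≤ iterLog k x + Real.log 2 := by
  induction k with
  | zero => omega
  | succ m ih =>
    rcases Nat.eq_zero_or_pos m with hm | hm
    · subst hm
      filter_upwards [eventually_gt_atTop (0:ℝ)] with x hx
      show Real.log (2 * x) ≤ Real.log x + Real.log 2
      rw [Real.log_mul (by norm_num) hx.ne']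
      linarith
    · have ht : Tendsto (fun x : ℝ => 2 * x) atTop atTop :=
        Tendsto.const_mul_atTop (by norm_num) tendsto_id
      filter_upwards [ih hm, (iterLog_tendsto m).eventually_ge_atTop 1,
        ht.eventually ((iterLog_tendsto m).eventually_ge_atTop 1)] with x h1 h2 h3
      show Real.log (iterLog m (2 * x)) ≤ Real.log (iterLog m x) + Real.log 2
      have hlog2 : Real.log 2 ≤ 1 := by
        have := Real.log_le_sub_one_of_pos (x := 2) (by norm_num); linarith
      calc Real.log (iterLog m (2 * x)) ≤ Real.log (iterLog m x + Real.log 2) :=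
            Real.log_le_log (by linarith) h1
        _ ≤ Real.log (2 * iterLog m x) := Real.log_le_log (by linarith) (by linarith)
        _ = Real.log (iterLog m x) + Real.log 2 := by
            rw [Real.log_mul (by norm_num) (by linarith)]; ring

lemma iterLog_le_log (k : ℕ) (hk : 1 ≤ k) :
    ∀ᶠ x : ℝ in atTop, iterLog k x ≤ Real.log x := by
  induction k with
  | zero => omega
  | succ m ih =>
    rcases Nat.eq_zero_or_pos m with hm | hm
    · subst hm
      filter_upwards [] with x; exact le_rfl
    · filter_upwards [ih hm, (iterLog_tendsto m).eventually_ge_atTop 0] with x h1 h2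
      show Real.log (iterLog m x) ≤ Real.log x
      exact (Real.log_le_self h2).trans h1

set_option maxHeartbeats 1000000 in
theorem stmt_11 (q : ℕ) (hq : 4 ≤ q) (σ : ℝ) (hσ0 : 0 < σ) (hσ1 : σ < 1) :
    ∃ N : ℕ, ∀ n ≥ N,
      n * ⌈Real.exp ((n : ℝ) / (iterLog (q - 3) (n : ℝ)) ^ (1 / σ))⌉₊ ≤
        ⌈Real.exp ((2 * n : ℕ) / (iterLog (q - 3) ((2 * n : ℕ) : ℝ)) ^ (1 / σ))⌉₊ := by
  set k := q - 3 with hkdef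
  have hk : 1 ≤ k := by omega
  have hσ : (0:ℝ) < 1 / σ := by positivity
  have ht2 : Tendsto (fun x : ℝ => 2 * x) atTop atTop :=
    Tendsto.const_mul_atTop (by norm_num) tendsto_id
  -- constant c for condition C4
  have hc : (0:ℝ) < ((3/2:ℝ) ^ σ - 1) := by
    have : (1:ℝ) < (3/2:ℝ) ^ σ := by
      rw [Real.one_lt_rpow_iff_of_pos (by norm_num)]
      exact Or.inl ⟨by norm_num, hσ0⟩
    linarith
  -- C6 : 3 * log (2x) * (log x)^(1/σ) ≤ x eventually
  have hC6 : ∀ᶠ x : ℝ in atTop, 3 * Real.log (2 * x) * (Real.log x) ^ (1/σ) ≤ x := by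
    have hlittle := isLittleO_log_rpow_rpow_atTop (1 + 1/σ) (one_pos)
    have hbound := hlittle.def (c := 1/6) (by norm_num)
    filter_upwards [hbound, tendsto_log_atTop.eventually_ge_atTop 1,
      eventually_ge_atTop (0:ℝ)] with x hb hlx hx0
    have hlx0 : (0:ℝ) ≤ Real.log x := by linarith
    have hlog2 : Real.log 2 ≤ Real.log x := by
      have := Real.log_le_sub_one_of_pos (x := 2) (by norm_num); linarith
    have hxpos : (0:ℝ) < x := by
      rcases eq_or_lt_of_le hx0 with h | h
      · exfalso; rw [← h] at hlx; simp at hlx; linarith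
      · exact h
    have h2x : Real.log (2 * x) ≤ 2 * Real.log x := by
      rw [Real.log_mul (by norm_num) hxpos.ne']; linarith
    have hkey : 6 * (Real.log x) ^ (1 + 1/σ) ≤ x := by
      rw [norm_eq_abs, norm_eq_abs, abs_of_nonneg (Real.rpow_nonneg hlx0 _),
        abs_of_nonneg (Real.rpow_nonneg hx0 _), Real.rpow_one] at hb
      linarith
    have hsplit : (Real.log x) ^ (1 + 1/σ) = Real.log x * (Real.log x) ^ (1/σ) := by
      rw [Real.rpow_add' hlx0 (by positivity), Real.rpow_one]
    nlinarith [Real.rpow_nonneg hlx0 (1/σ), mul_nonneg (mul_nonneg (by norm_num : (0:ℝ) ≤ 3)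
      (sub_nonneg.2 h2x)) (Real.rpow_nonneg hlx0 (1/σ))]
  -- assemble all eventual conditions, transferred to ℕ
  have hev : ∀ᶠ n : ℕ in atTop,
      1 ≤ iterLog k (n : ℝ) ∧ 1 ≤ iterLog k (2 * (n : ℝ)) ∧
      iterLog k (2 * (n : ℝ)) ≤ iterLog k (n : ℝ) + Real.log 2 ∧
      Real.log 2 ≤ ((3/2:ℝ) ^ σ - 1) * iterLog k (n : ℝ) ∧
      iterLog k (n : ℝ) ≤ Real.log (n : ℝ) ∧
      3 * Real.log (2 * (n : ℝ)) * (Real.log (n : ℝ)) ^ (1/σ) ≤ (n : ℝ) ∧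
      1 ≤ Real.log (n : ℝ) ∧ (1:ℝ) ≤ (n : ℝ) := by
    have hcast : Tendsto (fun n : ℕ => (n : ℝ)) atTop atTop := tendsto_natCast_atTop_atTop
    filter_upwards [hcast.eventually ((iterLog_tendsto k).eventually_ge_atTop 1),
      hcast.eventually (ht2.eventually ((iterLog_tendsto k).eventually_ge_atTop 1)),
      hcast.eventually (iterLog_two_mul k hk),
      hcast.eventually ((iterLog_tendsto k).eventually_ge_atTop
        (Real.log 2 / ((3/2:ℝ) ^ σ - 1))),
      hcast.eventually (iterLog_le_log k hk),
      hcast.eventually hC6,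
      hcast.eventually (tendsto_log_atTop.eventually_ge_atTop 1),
      hcast.eventually (eventually_ge_atTop (1:ℝ))] with n h1 h2 h3 h4 h5 h6 h7 h8
    refine ⟨h1, h2, h3, ?_, h5, h6, h7, h8⟩
    rw [div_le_iff₀ hc] at h4
    linarith
  rw [eventually_atTop] at hev
  obtain ⟨N, hN⟩ := hev
  refine ⟨N, fun n hn => ?_⟩
  obtain ⟨hC1, hC2, hC3, hC4, hC5, hC6', hC7, hC8⟩ := hN n hn
  set x : ℝ := (n : ℝ) with hx
  set L : ℝ := iterLog k x with hL
  set L2 : ℝ := iterLog k (2 * x) with hL2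
  have hx0 : (0:ℝ) < x := by linarith
  have hL1σ : (1:ℝ) ≤ L ^ (1/σ) := by
    have := Real.rpow_le_rpow (by norm_num : (0:ℝ) ≤ 1) hC1 hσ.le
    rwa [Real.one_rpow] at this
  have hL21σ : (1:ℝ) ≤ L2 ^ (1/σ) := by
    have := Real.rpow_le_rpow (by norm_num : (0:ℝ) ≤ 1) hC2 hσ.le
    rwa [Real.one_rpow] at this
  have hLpos : (0:ℝ) < L ^ (1/σ) := lt_of_lt_of_le one_pos hL1σ
  have hL2pos : (0:ℝ) < L2 ^ (1/σ) := lt_of_lt_of_le one_pos hL21σ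
  have hL2le : L2 ≤ (3/2:ℝ) ^ σ * L := by nlinarith [hC3, hC4]
  have hpow : L2 ^ (1/σ) ≤ (3/2) * L ^ (1/σ) := by
    calc L2 ^ (1/σ) ≤ ((3/2:ℝ) ^ σ * L) ^ (1/σ) :=
          Real.rpow_le_rpow (by linarith) hL2le hσ.le
      _ = ((3/2:ℝ) ^ σ) ^ (1/σ) * L ^ (1/σ) :=
          Real.mul_rpow (Real.rpow_nonneg (by norm_num) _) (by linarith)
      _ = (3/2) * L ^ (1/σ) := by
          rw [← Real.rpow_mul (by norm_num : (0:ℝ) ≤ 3/2), mul_one_div,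
            div_self hσ0.ne', Real.rpow_one]
  have hcast2 : ((2 * n : ℕ) : ℝ) = 2 * x := by push_cast; ring
  rw [hcast2, ← Nat.cast_le (α := ℝ)]
  push_cast
  set a : ℝ := x / L ^ (1/σ) with ha
  set b : ℝ := 2 * x / L2 ^ (1/σ) with hb
  have ha0 : 0 ≤ a := by positivity
  have hstep1 : (4/3) * a ≤ b := by
    have h1 : 2 * x / ((3/2) * L ^ (1/σ)) ≤ b :=
      div_le_div_of_nonneg_left (by linarith) hL2pos hpow
    have h2 : 2 * x / ((3/2) * L ^ (1/σ)) = (4/3) * a := by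
      rw [ha]; field_simp; ring
    linarith [h2 ▸ h1]
  have hlogpow : L ^ (1/σ) ≤ (Real.log x) ^ (1/σ) :=
    Real.rpow_le_rpow (by linarith) hC5 hσ.le
  have hlogpow_pos : (0:ℝ) < (Real.log x) ^ (1/σ) := lt_of_lt_of_le hLpos hlogpow
  have hax : x / (Real.log x) ^ (1/σ) ≤ a :=
    div_le_div_of_nonneg_left (by linarith) hLpos hlogpow
  have hstep3 : Real.log (2 * x) ≤ (1/3) * (x / (Real.log x) ^ (1/σ)) := by
    have h : Real.log (2 * x) ≤ x / (3 * (Real.log x) ^ (1/σ)) := by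
      rw [le_div_iff₀ (by positivity)]
      linarith [hC6']
    have heq : x / (3 * (Real.log x) ^ (1/σ)) = (1/3) * (x / (Real.log x) ^ (1/σ)) := by
      ring
    linarith [heq ▸ h]
  have key : Real.log (2 * x) + a ≤ b := by linarith
  have hceil : (⌈Real.exp a⌉₊ : ℝ) ≤ Real.exp a + 1 :=
    (Nat.ceil_lt_add_one (Real.exp_nonneg _)).le
  have h1expa : 1 ≤ Real.exp a := Real.one_le_exp ha0
  calc (n : ℝ) * ⌈Real.exp a⌉₊ ≤ x * (Real.exp a + 1) :=
        mul_le_mul_of_nonneg_left hceil (by linarith)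
    _ ≤ x * (2 * Real.exp a) := by nlinarith
    _ = Real.exp (Real.log (2 * x) + a) := by
        rw [Real.exp_add, Real.exp_log (by linarith)]; ring
    _ ≤ Real.exp b := Real.exp_le_exp.2 key
    _ ≤ ⌈Real.exp b⌉₊ := Nat.le_ceil _
end
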